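/- Fix an integer n ≥ 1, a prime p, and integers 0 ≤ e_1 ≤ ⋯ ≤ e_n < ∞, and let m > e_1 + ⋯ + e_n. Let S = diag(p^{e_1},…,p^{e_n}) and let A ∈ 𝒮_S^m. If L, R ∈ ℤ^{n×n} are any integer matrices satisfying A = (L S R) rem p^m (entrywise remainder on division by p^m), then v_p(det L) = v_p(det R) = 0; in particular L and R are invertible modulo p^m. -/

import Mathlib

open Matrix

/-- `s : Fin n → ℤ` is (the diagonal of) a Smith normal form of `A`:
`A = P ⬝ diagonal s ⬝ Q` for unimodular `P, Q`, with the divisibility chain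
`s i ∣ s j` for `i ≤ j`. -/
def IsSmithDiag {n : ℕ} (A : Matrix (Fin n) (Fin n) ℤ) (s : Fin n → ℤ) : Prop :=
  (∃ P Q : Matrix (Fin n) (Fin n) ℤ, IsUnit P.det ∧ IsUnit Q.det ∧
      A = P * Matrix.diagonal s * Q) ∧
    ∀ i j : Fin n, i ≤ j → s i ∣ s j

/-- `𝒮_S^m` for `S = diag(p^{e 1}, …, p^{e n})`: the set of `n × n` integer
matrices with entries in `[0, p^m)` whose Smith normal form `diag s` satisfies
`v_p(s i) = e i` for all `i`. -/
def SClass (n p m : ℕ) (e : Fin n → ℕ) : Set (Matrix (Fin n) (Fin n) ℤ) :=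
  {A | (∀ i j, 0 ≤ A i j ∧ A i j < (p : ℤ) ^ m) ∧
    ∃ s : Fin n → ℤ, IsSmithDiag A s ∧
      ∀ i, (p : ℤ) ^ (e i) ∣ s i ∧ ¬ (p : ℤ) ^ (e i + 1) ∣ s i}

/-- Let `0 ≤ e 1 ≤ ⋯ ≤ e n`, `m > e 1 + ⋯ + e n`,
`S = diag(p^{e 1}, …, p^{e n})` and `A ∈ 𝒮_S^m`.  If `L, R ∈ ℤ^{n×n}` satisfy
`A = (L * S * R) rem p^m` (entrywise remainder), then
`v_p(det L) = v_p(det R) = 0` (i.e. `p ∤ det L` and `p ∤ det R`); in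
particular `L` and `R` are invertible modulo `p^m`. -/
lemma isUnit_zmod_of_not_dvd (p m : ℕ) (hp : p.Prime) (d : ℤ) (hd : ¬ (p : ℤ) ∣ d) :
    IsUnit ((d : ZMod (p ^ m))) := by
  have hpZ : Prime (p : ℤ) := Nat.prime_iff_prime_int.mp hp
  have hco : IsCoprime ((p : ℤ) ^ m) d := (hpZ.coprime_iff_not_dvd.mpr hd).pow_left
  obtain ⟨a, b, hab⟩ := hco
  have h0 : ((p : ZMod (p ^ m))) ^ m = 0 := by
    have := ZMod.natCast_self (p ^ m)
    push_cast at this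
    exact this
  have h1 := congrArg (Int.cast : ℤ → ZMod (p ^ m)) hab
  push_cast at h1
  rw [h0] at h1
  exact IsUnit.of_mul_eq_one (a := (d : ZMod (p ^ m))) (b : ZMod (p ^ m)) (by linear_combination h1)


theorem lsr_rem_unimodular (n : ℕ) (hn : 1 ≤ n) (p : ℕ) (hp : p.Prime)
    (e : Fin n → ℕ) (he : Monotone e) (m : ℕ) (hm : (∑ i, e i) < m)
    (A : Matrix (Fin n) (Fin n) ℤ) (hA : A ∈ SClass n p m e)
    (L R : Matrix (Fin n) (Fin n) ℤ)
    (hLSR : A = (L * Matrix.diagonal (fun i => (p : ℤ) ^ (e i)) * R).map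
        (fun x => x % (p : ℤ) ^ m)) :
    (¬ (p : ℤ) ∣ L.det ∧ ¬ (p : ℤ) ∣ R.det) ∧
      IsUnit ((L.map (Int.cast : ℤ → ZMod (p ^ m))).det) ∧
      IsUnit ((R.map (Int.cast : ℤ → ZMod (p ^ m))).det) := by
  have hpZ : Prime (p : ℤ) := Nat.prime_iff_prime_int.mp hp
  obtain ⟨hbd, s, ⟨⟨P, Q, hP, hQ, hPQ⟩, hchain⟩, hval⟩ := hA
  -- write s i = p^(e i) * t i with p ∤ t i
  have ht : ∀ i, ∃ t : ℤ, s i = (p : ℤ) ^ (e i) * t ∧ ¬ (p : ℤ) ∣ t := by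
    intro i
    obtain ⟨t, htt⟩ := (hval i).1
    refine ⟨t, htt, fun hdvd => (hval i).2 ?_⟩
    obtain ⟨u, hu⟩ := hdvd
    exact ⟨u, by rw [htt, hu]; ring⟩
  choose t hts hpt using ht
  set E : ℕ := ∑ i, e i with hE
  -- det A = det P * (p^E * ∏ t) * det Q
  have hdetA : A.det = P.det * ((p : ℤ) ^ E * ∏ i, t i) * Q.det := by
    rw [hPQ, det_mul, det_mul, det_diagonal]
    congr 1
    congr 1
    rw [hE, ← Finset.prod_pow_eq_pow_sum]
    rw [← Finset.prod_mul_distrib]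
    exact Finset.prod_congr rfl fun i _ => hts i
  -- congruence of determinants mod p^m
  set B := L * Matrix.diagonal (fun i => (p : ℤ) ^ (e i)) * R with hB
  have hdetB : B.det = L.det * (p : ℤ) ^ E * R.det := by
    rw [hB, det_mul, det_mul, det_diagonal, hE, Finset.prod_pow_eq_pow_sum]
  have hmodeq : A.det ≡ B.det [ZMOD (p ^ m : ℕ)] := by
    rw [← ZMod.intCast_eq_intCast_iff]
    have hmap : A.map (Int.cast : ℤ → ZMod (p ^ m)) = B.map Int.cast := by
      rw [hLSR]
      ext i j
      simp only [Matrix.map_apply]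
      rw [ZMod.intCast_eq_intCast_iff]
      have hc : ((p ^ m : ℕ) : ℤ) = (p : ℤ) ^ m := by push_cast; ring
      unfold Int.ModEq
      rw [hc]
      exact Int.emod_emod_of_dvd _ dvd_rfl
    have e1 := (Int.castRingHom (ZMod (p ^ m))).map_det A
    have e2 := (Int.castRingHom (ZMod (p ^ m))).map_det B
    simp only [Int.coe_castRingHom, RingHom.mapMatrix_apply] at e1 e2
    rw [e1, e2, hmap]
  -- so p^m ∣ A.det - B.det, extract
  have hdvd : ((p : ℤ) ^ m) ∣ (A.det - B.det) := by
    have := hmodeq.dvd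
    have hcast : ((p ^ m : ℕ) : ℤ) = (p : ℤ) ^ m := by push_cast; ring
    rw [hcast] at this
    exact (dvd_sub_comm).mp this
  have hEm : E < m := hm
  have hsplit : (p : ℤ) ^ m = (p : ℤ) ^ E * (p : ℤ) ^ (m - E) := by
    rw [← pow_add]; congr 1; omega
  have hdvd2 : (p : ℤ) ^ (m - E) ∣ (P.det * (∏ i, t i) * Q.det - L.det * R.det) := by
    have h1 : A.det - B.det = (p : ℤ) ^ E * (P.det * (∏ i, t i) * Q.det - L.det * R.det) := by
      rw [hdetA, hdetB]; ring
    rw [h1, hsplit] at hdvd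
    exact (mul_dvd_mul_iff_left (pow_ne_zero E (by exact_mod_cast hp.ne_zero))).mp hdvd
  have hdvd3 : (p : ℤ) ∣ (P.det * (∏ i, t i) * Q.det - L.det * R.det) :=
    dvd_trans (dvd_pow_self _ (by omega)) hdvd2
  -- p does not divide the left product
  have hnP : ¬ (p : ℤ) ∣ P.det := fun h => hpZ.not_unit (isUnit_of_dvd_unit h hP)
  have hnQ : ¬ (p : ℤ) ∣ Q.det := fun h => hpZ.not_unit (isUnit_of_dvd_unit h hQ)
  have hnT : ¬ (p : ℤ) ∣ ∏ i, t i := by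
    intro h
    obtain ⟨i, _, hi⟩ := hpZ.exists_mem_finset_dvd h
    exact hpt i hi
  have hnLR : ¬ (p : ℤ) ∣ L.det * R.det := by
    intro h
    have : (p : ℤ) ∣ P.det * (∏ i, t i) * Q.det := by
      have := dvd_add hdvd3 h
      simpa using this
    rcases hpZ.dvd_mul.mp this with h' | h'
    · rcases hpZ.dvd_mul.mp h' with h'' | h''
      · exact hnP h''
      · exact hnT h''
    · exact hnQ h'
  have hnL : ¬ (p : ℤ) ∣ L.det := fun h => hnLR (h.mul_right _)
  have hnR : ¬ (p : ℤ) ∣ R.det := fun h => hnLR (h.mul_left _)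
  have eL := (Int.castRingHom (ZMod (p ^ m))).map_det L
  have eR := (Int.castRingHom (ZMod (p ^ m))).map_det R
  simp only [Int.coe_castRingHom, RingHom.mapMatrix_apply] at eL eR
  exact ⟨⟨hnL, hnR⟩, eL ▸ isUnit_zmod_of_not_dvd p m hp _ hnL,
    eR ▸ isUnit_zmod_of_not_dvd p m hp _ hnR⟩
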